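/- The 2-dimensional Selmer map is well defined on the absorbing set: define Δ_{S_a} = {(x_1,x_2) : 1 ≥ x_1 ≥ x_2 ≥ 0, 2x_2 > 1} and Δ_{S_b} = {(x_1,x_2) : 1 ≥ x_1 ≥ x_2 ≥ 0, 2x_2 < 1 ≤ x_1 + x_2}, and T_S(x_1,x_2) = the descending reordering of (1−x_2, x_1, x_2) divided by its largest entry, with the leading 1 removed. Then T_S maps Δ_{S_a} ∪ Δ_{S_b} into the closure of Δ_{S_a} ∪ Δ_{S_b}; explicitly, for x ∈ Δ_{S_a}, T_S(x) = (x_2/x_1, (1−x_2)/x_1), and for x ∈ Δ_{S_b}, T_S(x) = ((1−x_2)/x_1, x_2/x_1) when x_2 ≤ 1−x_2 ≤ x_1 (cases at the boundary excluded), and in both cases the image satisfies x'_1 + x'_2 ≥ 1. -/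

import Mathlib

/-- The 2-dimensional Selmer map is well defined on the absorbing set
`Δ_{S_a} ∪ Δ_{S_b}`: for `x ∈ Δ_{S_a}` (`2x₂ > 1`) the vector `(1−x₂, x₁, x₂)` sorts
descendingly to `(x₁, x₂, 1−x₂)` and `T_S(x) = (x₂/x₁, (1−x₂)/x₁)`; for `x ∈ Δ_{S_b}`
(`2x₂ < 1 ≤ x₁ + x₂`) it sorts to `(x₁, 1−x₂, x₂)` and `T_S(x) = ((1−x₂)/x₁, x₂/x₁)`.
In both cases the image lies in the closure of the absorbing set: it is descendingly
ordered, lies in `[0,1]²`, and its coordinate sum is `≥ 1`. -/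
theorem stmt14 (x₁ x₂ : ℝ) (h1 : x₁ ≤ 1) (h2 : x₂ ≤ x₁) (h3 : 0 ≤ x₂) :
    (2 * x₂ > 1 →
      1 - x₂ < x₂ ∧ x₂ ≤ x₁ ∧
      x₂ / x₁ ≤ 1 ∧ (1 - x₂) / x₁ ≤ x₂ / x₁ ∧ 0 ≤ (1 - x₂) / x₁ ∧
      1 ≤ x₂ / x₁ + (1 - x₂) / x₁) ∧
    (2 * x₂ < 1 → 1 ≤ x₁ + x₂ →
      x₂ < 1 - x₂ ∧ 1 - x₂ ≤ x₁ ∧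
      (1 - x₂) / x₁ ≤ 1 ∧ x₂ / x₁ ≤ (1 - x₂) / x₁ ∧ 0 ≤ x₂ / x₁ ∧
      1 ≤ (1 - x₂) / x₁ + x₂ / x₁) := by
  constructor
  · intro ha
    have hx1 : (0:ℝ) < x₁ := by linarith
    refine ⟨by linarith, h2, ?_, ?_, ?_, ?_⟩
    · exact div_le_one_of_le₀ h2 hx1.le
    · exact div_le_div_of_nonneg_right (by linarith) hx1.le
    · exact div_nonneg (by linarith) hx1.le
    · rw [← add_div, le_div_iff₀ hx1]; linarith
  · intro hb hsum
    have hx1 : (0:ℝ) < x₁ := by linarith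
    refine ⟨by linarith, by linarith, ?_, ?_, ?_, ?_⟩
    · exact div_le_one_of_le₀ (by linarith) hx1.le
    · exact div_le_div_of_nonneg_right (by linarith) hx1.le
    · exact div_nonneg (by linarith) hx1.le
    · rw [← add_div, le_div_iff₀ hx1]; linarith
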